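/- Let b > 0 and u ∈ C¹([0,b], ℂ), and let σ ≥ 0. Then ∫₀ᵇ |u'(t)|² dt + σ|u(0)|² ≥ (1/4)∫₀ᵇ [ (t + 1/(2σ))⁻² + (b + 1/(2σ))⁻² ] |u(t)|² dt + (1/2)(b + 1/(2σ))⁻¹ |u(0)|². (For σ = 0 the terms involving 1/(2σ) are interpreted as vanishing, i.e., the inequality is trivial in that case; one may assume σ > 0.) -/

import Mathlib

open MeasureTheory Set intervalIntegral

theorem one_dim_robin_hardy (b σ : ℝ) (hb : 0 < b) (hσ : 0 < σ) (u : ℝ → ℂ)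
    (hu : ContDiffOn ℝ 1 u (Set.Icc 0 b)) :
    (∫ t in (0:ℝ)..b, ‖deriv u t‖ ^ 2) + σ * ‖u 0‖ ^ 2 ≥
      (1 / 4) * (∫ t in (0:ℝ)..b,
          (((t + 1 / (2 * σ)) ^ 2)⁻¹ + ((b + 1 / (2 * σ)) ^ 2)⁻¹) * ‖u t‖ ^ 2)
        + (1 / 2) * (b + 1 / (2 * σ))⁻¹ * ‖u 0‖ ^ 2 := by
  set c : ℝ := 1 / (2 * σ) with hc
  have hc0 : 0 < c := by positivity
  have hW0 : 0 < b + c := by linarith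
  have hIcc : Set.uIcc (0:ℝ) b = Set.Icc 0 b := Set.uIcc_of_le hb.le
  set v : ℝ → ℂ := derivWithin u (Set.Icc 0 b) with hv
  have hvcont : ContinuousOn v (Set.Icc 0 b) :=
    hu.continuousOn_derivWithin (uniqueDiffOn_Icc hb) le_rfl
  have hucont : ContinuousOn u (Set.Icc 0 b) := hu.continuousOn
  have huderiv : ∀ t ∈ Set.Ioo 0 b, HasDerivAt u (v t) t := by
    intro t ht
    have h1 : Set.Icc (0:ℝ) b ∈ nhds t := Icc_mem_nhds ht.1 ht.2
    have h2 := (hu.differentiableOn one_ne_zero t (Set.Ioo_subset_Icc_self ht)).differentiableAt h1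
    have h3 : v t = deriv u t := derivWithin_of_mem_nhds h1
    rw [h3]
    exact h2.hasDerivAt
  -- the weight function
  set g : ℝ → ℝ := fun t => (2 * (b + c))⁻¹ - (2 * (t + c))⁻¹ with hg
  set g' : ℝ → ℝ := fun t => (2 * (t + c) ^ 2)⁻¹ with hg'
  have hwpos : ∀ t ∈ Set.Icc (0:ℝ) b, 0 < t + c := fun t ht => by
    have := ht.1; linarith
  have hgc : ContinuousOn g (Set.Icc 0 b) := by
    apply continuousOn_const.sub
    exact ((continuous_const.mul (continuous_id.add continuous_const)).continuousOn).inv₀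
      (fun t ht => by have := hwpos t ht; show 2 * (t + c) ≠ 0; positivity)
  have hg'c : ContinuousOn g' (Set.Icc 0 b) := by
    exact ((continuous_const.mul ((continuous_id.add continuous_const).pow 2)).continuousOn).inv₀
      (fun t ht => by have := hwpos t ht; show 2 * (t + c) ^ 2 ≠ 0; positivity)
  have hgd : ∀ t ∈ Set.Ioo 0 b, HasDerivAt g (g' t) t := by
    intro t ht
    have hw : 0 < t + c := hwpos t (Set.Ioo_subset_Icc_self ht)
    have htc : (2 * (t + c)) ≠ 0 := by positivity
    have h1 : HasDerivAt (fun s : ℝ => 2 * (s + c)) 2 t := by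
      simpa using ((hasDerivAt_id t).add_const c).const_mul (2:ℝ)
    have h3 := (h1.inv htc).const_sub ((2 * (b + c))⁻¹)
    refine h3.congr_deriv (Eq.symm ?_)
    simp only [hg']
    rw [eq_comm, neg_div, neg_neg]
    rw [div_eq_inv_mul]
    field_simp
  -- N, R, P, D
  set R : ℝ → ℝ := fun t => 2 * ((u t).re * (v t).re + (u t).im * (v t).im) with hR
  have hRcont : ContinuousOn R (Set.Icc 0 b) := by
    apply continuousOn_const.mul
    exact ((Complex.continuous_re.comp_continuousOn hucont).mul
        (Complex.continuous_re.comp_continuousOn hvcont)).add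
      ((Complex.continuous_im.comp_continuousOn hucont).mul
        (Complex.continuous_im.comp_continuousOn hvcont))
  have hNcont : ContinuousOn (fun t => Complex.normSq (u t)) (Set.Icc 0 b) :=
    Complex.continuous_normSq.comp_continuousOn hucont
  have hN : ∀ t ∈ Set.Ioo 0 b, HasDerivAt (fun t => Complex.normSq (u t)) (R t) t := by
    intro t ht
    have hu' := huderiv t ht
    have hre : HasDerivAt (fun t => (u t).re) ((v t).re) t :=
      Complex.reCLM.hasFDerivAt.comp_hasDerivAt t hu'
    have him : HasDerivAt (fun t => (u t).im) ((v t).im) t :=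
      Complex.imCLM.hasFDerivAt.comp_hasDerivAt t hu'
    have h2 := (hre.mul hre).add (him.mul him)
    simp only [Complex.normSq_apply]
    refine h2.congr_deriv (Eq.symm ?_)
    simp only [hR]; ring
  set D : ℝ → ℝ := fun t => g' t * Complex.normSq (u t) + g t * R t with hD
  have hDcont : ContinuousOn D (Set.Icc 0 b) := (hg'c.mul hNcont).add (hgc.mul hRcont)
  have hFd : ∀ t ∈ Set.Ioo 0 b, HasDerivAt (fun t => g t * Complex.normSq (u t)) (D t) t :=
    fun t ht => (hgd t ht).mul (hN t ht)
  have hDint : IntervalIntegrable D volume 0 b := (hIcc ▸ hDcont).intervalIntegrable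
  have hFTC : ∫ t in (0:ℝ)..b, D t
      = g b * Complex.normSq (u b) - g 0 * Complex.normSq (u 0) :=
    integral_eq_sub_of_hasDeriv_right_of_le hb.le (hgc.mul hNcont)
      (fun t ht => (hFd t ht).hasDerivWithinAt) hDint
  have hgb : g b = 0 := by simp [hg]
  -- P
  set P : ℝ → ℝ := fun t => Complex.normSq (v t + (g t : ℂ) * u t) with hP
  have hPcont : ContinuousOn P (Set.Icc 0 b) :=
    Complex.continuous_normSq.comp_continuousOn
      (hvcont.add ((Complex.continuous_ofReal.comp_continuousOn hgc).mul hucont))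
  have hPint : IntervalIntegrable P volume 0 b := (hIcc ▸ hPcont).intervalIntegrable
  set Q : ℝ → ℝ := fun t => (g' t - g t ^ 2) * Complex.normSq (u t) with hQ
  have hQcont : ContinuousOn Q (Set.Icc 0 b) := (hg'c.sub (hgc.pow 2)).mul hNcont
  have hQint : IntervalIntegrable Q volume 0 b := (hIcc ▸ hQcont).intervalIntegrable
  -- pointwise algebraic identity
  have hpt : ∀ t, Complex.normSq (v t) = P t + Q t - D t := by
    intro t
    simp only [hP, hQ, hD, hR, Complex.normSq_apply, Complex.add_re, Complex.add_im,
      Complex.mul_re, Complex.mul_im, Complex.ofReal_re, Complex.ofReal_im]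
    ring
  -- main identity
  have hmain : ∫ t in (0:ℝ)..b, Complex.normSq (v t)
      = (∫ t in (0:ℝ)..b, P t) + (∫ t in (0:ℝ)..b, Q t) + g 0 * Complex.normSq (u 0) := by
    rw [intervalIntegral.integral_congr (g := fun t => P t + Q t - D t) (fun t _ => hpt t)]
    rw [intervalIntegral.integral_sub (hPint.add hQint) hDint,
      intervalIntegral.integral_add hPint hQint, hFTC, hgb]
    ring
  have hPnn : 0 ≤ ∫ t in (0:ℝ)..b, P t :=
    intervalIntegral.integral_nonneg hb.le (fun t _ => Complex.normSq_nonneg _)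
  -- comparison of Q with the Hardy weight
  set G : ℝ → ℝ := fun t => (1/4) * ((((t + c) ^ 2)⁻¹ + ((b + c) ^ 2)⁻¹) * Complex.normSq (u t))
    with hG
  have hGcont : ContinuousOn G (Set.Icc 0 b) := by
    apply continuousOn_const.mul
    apply ContinuousOn.mul _ hNcont
    apply ContinuousOn.add
    · exact (((continuous_id.add continuous_const).pow 2).continuousOn).inv₀
        (fun t ht => by have := hwpos t ht; show (t + c) ^ 2 ≠ 0; positivity)
    · exact continuousOn_const.inv₀ (fun t ht => by positivity)
  have hGint : IntervalIntegrable G volume 0 b := (hIcc ▸ hGcont).intervalIntegrable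
  have hQG : ∫ t in (0:ℝ)..b, G t ≤ ∫ t in (0:ℝ)..b, Q t := by
    apply intervalIntegral.integral_mono_on hb.le hGint hQint
    intro t ht
    have hw : 0 < t + c := hwpos t ht
    have hwW : t + c ≤ b + c := by linarith [ht.2]
    have key : g' t - g t ^ 2 - (1/4) * (((t + c) ^ 2)⁻¹ + ((b + c) ^ 2)⁻¹)
        = (b - t) / (2 * (b + c) ^ 2 * (t + c)) := by
      simp only [hg, hg']
      field_simp
      ring
    have hnn : 0 ≤ (b - t) / (2 * (b + c) ^ 2 * (t + c)) :=
      div_nonneg (by linarith [ht.2]) (by positivity)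
    simp only [hQ, hG]
    rw [← mul_assoc]
    apply mul_le_mul_of_nonneg_right _ (Complex.normSq_nonneg _)
    linarith
  -- convert integrals in the goal
  have hnsq : ∀ z : ℂ, ‖z‖ ^ 2 = Complex.normSq z := by
    intro z; rw [Complex.sq_norm]
  have hderiv_eq : ∫ t in (0:ℝ)..b, ‖deriv u t‖ ^ 2 = ∫ t in (0:ℝ)..b, Complex.normSq (v t) := by
    apply intervalIntegral.integral_congr_ae
    have hbae : ∀ᵐ t : ℝ ∂volume, t ≠ b := by
      rw [MeasureTheory.ae_iff]
      have : {t : ℝ | ¬ t ≠ b} = {b} := by ext t; simp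
      rw [this]
      exact measure_singleton b
    filter_upwards [hbae] with t htb hmem
    rw [Set.uIoc_of_le hb.le] at hmem
    have ht : t ∈ Set.Ioo (0:ℝ) b := ⟨hmem.1, lt_of_le_of_ne hmem.2 htb⟩
    have h3 : v t = deriv u t := derivWithin_of_mem_nhds (Icc_mem_nhds ht.1 ht.2)
    rw [← h3, hnsq]
  have hGgoal : (1 / 4) * (∫ t in (0:ℝ)..b,
      (((t + c) ^ 2)⁻¹ + ((b + c) ^ 2)⁻¹) * ‖u t‖ ^ 2) = ∫ t in (0:ℝ)..b, G t := by
    rw [← intervalIntegral.integral_const_mul]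
    apply intervalIntegral.integral_congr
    intro t _
    simp only [hG, hnsq]
  -- boundary coefficient
  have hg0 : g 0 + σ = (1/2) * (b + c)⁻¹ := by
    simp only [hg, hc, zero_add]
    field_simp
    ring
  have hg0mul : g 0 * Complex.normSq (u 0) + σ * ‖u 0‖ ^ 2
      = (1/2) * (b + c)⁻¹ * ‖u 0‖ ^ 2 := by
    rw [hnsq, ← add_mul, hg0]
  rw [ge_iff_le, hderiv_eq, hmain, hGgoal]
  have : (1/2) * (b + c)⁻¹ * ‖u 0‖ ^ 2 = 1 / 2 * (b + c)⁻¹ * ‖u 0‖ ^ 2 := by norm_num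
  linarith [hg0mul]
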